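/- Let i ≥ 1 and suppose χ_i := q11^{i²}·q12^i·q21^i·q22 satisfies χ_i = −1. Then (D₁^{i-1} ∘ D₂)(z_i²) = c_i·z_{i+1}, where c_i := q21^{-i}·b_i·[i]!_{q11^{-1}}. -/

import Mathlib

noncomputable section

variable {k : Type*} [Field k]

/-- The algebra endomorphism of the free algebra on two generators with
`x1 ↦ a • x1`, `x2 ↦ b • x2`. -/
def alph (a b : k) : FreeAlgebra k (Fin 2) →ₐ[k] FreeAlgebra k (Fin 2) :=
  FreeAlgebra.lift k ![a • FreeAlgebra.ι k 0, b • FreeAlgebra.ι k 1]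

/-- The elements `z_i`, defined by `z_0 = x2`, `z_{i+1} = x1·z_i − q11^i·q12·z_i·x1`. -/
def zz (q11 q12 : k) : ℕ → FreeAlgebra k (Fin 2)
  | 0 => FreeAlgebra.ι k 1
  | (i + 1) => FreeAlgebra.ι k 0 * zz q11 q12 i
      - (q11 ^ i * q12) • (zz q11 q12 i * FreeAlgebra.ι k 0)

/-- The elements `u_i`, defined by `u_0 = x1`, `u_{i+1} = u_i·x2 − q12·q22^i·x2·u_i`. -/
def uu (q12 q22 : k) : ℕ → FreeAlgebra k (Fin 2)
  | 0 => FreeAlgebra.ι k 0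
  | (i + 1) => uu q12 q22 i * FreeAlgebra.ι k 1
      - (q12 * q22 ^ i) • (FreeAlgebra.ι k 1 * uu q12 q22 i)

/-- The q-number `[m]_p = 1 + p + ⋯ + p^{m-1}`. -/
def qnum (p : k) (m : ℕ) : k := ∑ j ∈ Finset.range m, p ^ j

/-- The q-factorial `[m]!_p = [1]_p·[2]_p⋯[m]_p`. -/
def qfact (p : k) (m : ℕ) : k := ∏ l ∈ Finset.range m, qnum p (l + 1)

/-- `b_i = ∏_{j=0}^{i-1} (1 − q11^j·q12·q21)`. -/
def bb (q11 q12 q21 : k) (i : ℕ) : k :=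
  ∏ j ∈ Finset.range i, (1 - q11 ^ j * q12 * q21)

/-- `c_i = q21^{-i}·b_i·[i]!_{q11⁻¹}`. -/
def cc (q11 q12 q21 : k) (i : ℕ) : k :=
  q21⁻¹ ^ i * bb q11 q12 q21 i * qfact q11⁻¹ i

/-- `d_{i,0}`. -/
def dd (q11 q12 q21 q22 : k) (i : ℕ) : k :=
  q21⁻¹ * (1 - q11 ^ i * q12 * q21) * qnum q11⁻¹ (i + 1)
    + (q11 ^ (i * (i + 1)) * q12 ^ i * q21 ^ (i + 1) * q22)⁻¹
    - q11 ^ (i * (i + 1)) * q12 ^ (i + 1) * q21 ^ i * q22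

lemma alph_i0 (a b : k) : alph a b (FreeAlgebra.ι k 0) = a • FreeAlgebra.ι k 0 := by
  simp [alph]
lemma alph_i1 (a b : k) : alph a b (FreeAlgebra.ι k 1) = b • FreeAlgebra.ι k 1 := by
  simp [alph]

lemma alph_zz (a b q11 q12 : k) (i : ℕ) :
    alph a b (zz q11 q12 i) = (a ^ i * b) • zz q11 q12 i := by
  induction i with
  | zero => simpa [zz] using alph_i1 a b
  | succ n ih =>
    rw [zz, map_sub, map_mul, map_smul, map_mul, ih, alph_i0,
      smul_mul_assoc, mul_smul_comm, smul_smul, smul_mul_assoc, mul_smul_comm, smul_smul,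
      smul_smul, smul_sub, smul_smul]
    congr 2 <;> ring

lemma D1_zz (q11 q12 : k) (hq11 : q11 ≠ 0) (hq12 : q12 ≠ 0)
    (D1 : FreeAlgebra k (Fin 2) →ₗ[k] FreeAlgebra k (Fin 2))
    (hD1x1 : D1 (FreeAlgebra.ι k 0) = 1)
    (hD1x2 : D1 (FreeAlgebra.ι k 1) = 0)
    (hD1mul : ∀ a b : FreeAlgebra k (Fin 2),
      D1 (a * b) = D1 a * b + alph q11⁻¹ q12⁻¹ a * D1 b)
    (i : ℕ) : D1 (zz q11 q12 i) = 0 := by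
  induction i with
  | zero => simpa [zz] using hD1x2
  | succ n ih =>
    rw [zz, map_sub, map_smul, hD1mul, hD1mul, ih, hD1x1, alph_zz]
    simp only [mul_zero, mul_one, zero_mul, one_mul, add_zero, zero_add, smul_smul]
    rw [show q11 ^ n * q12 * (q11⁻¹ ^ n * q12⁻¹) = 1 by rw [mul_mul_mul_comm, ← mul_pow, mul_inv_cancel₀ hq11, one_pow, one_mul,
      mul_inv_cancel₀ hq12], one_smul, sub_self]

lemma qnum_succ (p : k) (m : ℕ) : qnum p (m + 1) = qnum p m + p ^ m :=
  Finset.sum_range_succ _ _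

lemma D2_zz (q11 q12 q21 q22 : k) (hq21 : q21 ≠ 0)
    (D2 : FreeAlgebra k (Fin 2) →ₗ[k] FreeAlgebra k (Fin 2))
    (hD2x1 : D2 (FreeAlgebra.ι k 0) = 0)
    (hD2x2 : D2 (FreeAlgebra.ι k 1) = 1)
    (hD2mul : ∀ a b : FreeAlgebra k (Fin 2),
      D2 (a * b) = D2 a * b + alph q21⁻¹ q22⁻¹ a * D2 b)
    (i : ℕ) : D2 (zz q11 q12 i)
      = (q21⁻¹ ^ i * bb q11 q12 q21 i) • (FreeAlgebra.ι k 0 ^ i) := by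
  induction i with
  | zero => simpa [zz, bb] using hD2x2
  | succ n ih =>
    rw [zz, map_sub, map_smul, hD2mul, hD2mul, ih, hD2x1, alph_i0, alph_zz]
    simp only [zero_mul, mul_zero, zero_add, add_zero, smul_mul_assoc, mul_smul_comm,
      smul_smul]
    rw [← pow_succ', ← pow_succ, ← sub_smul]
    congr 1
    simp only [bb, Finset.prod_range_succ]
    field_simp
    simp only [show ∀ x : ℕ, q21 * q12 * q11 ^ x = q21 * q11 ^ x * q12 from fun x => by ring]
    linear_combination (-((1 / q21) ^ n * (∏ x ∈ Finset.range n, (1 - q21 * q11 ^ x * q12))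
      * (1 - q21 * q11 ^ n * q12))) * mul_one_div_cancel hq21

lemma D1_pow (q11 q12 : k)
    (D1 : FreeAlgebra k (Fin 2) →ₗ[k] FreeAlgebra k (Fin 2))
    (hD1x1 : D1 (FreeAlgebra.ι k 0) = 1)
    (hD1mul : ∀ a b : FreeAlgebra k (Fin 2),
      D1 (a * b) = D1 a * b + alph q11⁻¹ q12⁻¹ a * D1 b)
    (m : ℕ) : D1 (FreeAlgebra.ι k 0 ^ (m + 1))
      = qnum q11⁻¹ (m + 1) • FreeAlgebra.ι k 0 ^ m := by
  induction m with
  | zero => simpa [qnum] using hD1x1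
  | succ n ih =>
    rw [pow_succ, hD1mul, ih, hD1x1, map_pow, alph_i0, smul_pow, mul_one,
      smul_mul_assoc, ← pow_succ, qnum_succ q11⁻¹ (n+1), add_smul]

lemma iter_smul {M : Type*} [AddCommMonoid M] [Module k M] (D : M →ₗ[k] M)
    (t : ℕ) (c : k) (v : M) : (⇑D)^[t] (c • v) = c • (⇑D)^[t] v := by
  induction t generalizing v with
  | zero => rfl
  | succ n ih => rw [Function.iterate_succ_apply, Function.iterate_succ_apply, map_smul, ih]

lemma D1_step (q11 q12 : k) (hq11 : q11 ≠ 0) (hq12 : q12 ≠ 0)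
    (D1 : FreeAlgebra k (Fin 2) →ₗ[k] FreeAlgebra k (Fin 2))
    (hD1x1 : D1 (FreeAlgebra.ι k 0) = 1)
    (hD1x2 : D1 (FreeAlgebra.ι k 1) = 0)
    (hD1mul : ∀ a b : FreeAlgebra k (Fin 2),
      D1 (a * b) = D1 a * b + alph q11⁻¹ q12⁻¹ a * D1 b)
    (i m : ℕ) (μ : k) :
    D1 (FreeAlgebra.ι k 0 ^ (m + 1) * zz q11 q12 i
        + μ • (zz q11 q12 i * FreeAlgebra.ι k 0 ^ (m + 1)))
      = qnum q11⁻¹ (m + 1) • (FreeAlgebra.ι k 0 ^ m * zz q11 q12 i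
        + (q11⁻¹ ^ i * q12⁻¹ * μ) • (zz q11 q12 i * FreeAlgebra.ι k 0 ^ m)) := by
  rw [map_add, map_smul, hD1mul, hD1mul,
    D1_zz q11 q12 hq11 hq12 D1 hD1x1 hD1x2 hD1mul,
    D1_pow q11 q12 D1 hD1x1 hD1mul, alph_zz]
  simp only [mul_zero, add_zero, zero_mul, zero_add, smul_mul_assoc, mul_smul_comm,
    smul_smul, smul_add]
  congr 1
  congr 1
  ring

lemma D1_iter (q11 q12 : k) (hq11 : q11 ≠ 0) (hq12 : q12 ≠ 0)
    (D1 : FreeAlgebra k (Fin 2) →ₗ[k] FreeAlgebra k (Fin 2))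
    (hD1x1 : D1 (FreeAlgebra.ι k 0) = 1)
    (hD1x2 : D1 (FreeAlgebra.ι k 1) = 0)
    (hD1mul : ∀ a b : FreeAlgebra k (Fin 2),
      D1 (a * b) = D1 a * b + alph q11⁻¹ q12⁻¹ a * D1 b)
    (i m : ℕ) : ∀ (t : ℕ) (μ : k),
    (⇑D1)^[t] (FreeAlgebra.ι k 0 ^ (m + t) * zz q11 q12 i
        + μ • (zz q11 q12 i * FreeAlgebra.ι k 0 ^ (m + t)))
      = (∏ j ∈ Finset.range t, qnum q11⁻¹ (m + j + 1)) •
        (FreeAlgebra.ι k 0 ^ m * zz q11 q12 i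
          + ((q11⁻¹ ^ i * q12⁻¹) ^ t * μ) • (zz q11 q12 i * FreeAlgebra.ι k 0 ^ m)) := by
  intro t
  induction t with
  | zero => intro μ; simp
  | succ n ih =>
    intro μ
    rw [Function.iterate_succ_apply,
      show m + (n + 1) = (m + n) + 1 from rfl,
      D1_step q11 q12 hq11 hq12 D1 hD1x1 hD1x2 hD1mul i (m + n) μ,
      iter_smul, ih, smul_smul, Finset.prod_range_succ]
    congr 1
    · ring
    · congr 2
      ring

lemma qfact_eq (p : k) (n : ℕ) :
    qfact p (n + 1) = ∏ j ∈ Finset.range n, qnum p (1 + j + 1) := by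
  rw [qfact, Finset.prod_range_succ']
  have h0 : qnum p (0 + 1) = 1 := by simp [qnum]
  rw [h0, mul_one]
  exact Finset.prod_congr rfl fun j _ => by rw [show j + 1 + 1 = 1 + j + 1 by omega]

theorem D1_pow_D2_z_sq
    (q11 q12 q21 q22 : k)
    (hq11 : q11 ≠ 0) (hq12 : q12 ≠ 0) (hq21 : q21 ≠ 0) (hq22 : q22 ≠ 0)
    (D1 : FreeAlgebra k (Fin 2) →ₗ[k] FreeAlgebra k (Fin 2))
    (hD1one : D1 1 = 0)
    (hD1x1 : D1 (FreeAlgebra.ι k 0) = 1)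
    (hD1x2 : D1 (FreeAlgebra.ι k 1) = 0)
    (hD1mul : ∀ a b : FreeAlgebra k (Fin 2),
      D1 (a * b) = D1 a * b + alph q11⁻¹ q12⁻¹ a * D1 b)
    (D2 : FreeAlgebra k (Fin 2) →ₗ[k] FreeAlgebra k (Fin 2))
    (hD2one : D2 1 = 0)
    (hD2x1 : D2 (FreeAlgebra.ι k 0) = 0)
    (hD2x2 : D2 (FreeAlgebra.ι k 1) = 1)
    (hD2mul : ∀ a b : FreeAlgebra k (Fin 2),
      D2 (a * b) = D2 a * b + alph q21⁻¹ q22⁻¹ a * D2 b)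
    (i : ℕ) (hi : 1 ≤ i)
    (hchi : q11 ^ (i ^ 2) * q12 ^ i * q21 ^ i * q22 = -1) :
    (⇑D1)^[i - 1] (D2 (zz q11 q12 i ^ 2))
      = cc q11 q12 q21 i • zz q11 q12 (i + 1) := by
  obtain ⟨n, rfl⟩ : ∃ n, i = n + 1 := ⟨i - 1, (Nat.succ_pred_eq_of_pos hi).symm⟩
  have hA : (q11 ^ ((n+1)*n) * q12 ^ n * q21 ^ (n+1) * q22) * (q11 ^ (n+1) * q12) = -1 := by
    rw [← hchi, show (n+1)^2 = (n+1)*n + (n+1) from by ring, pow_add,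
      show q12 ^ (n+1) = q12 ^ n * q12 from pow_succ q12 n]
    ring
  have key : (q11⁻¹ ^ (n+1) * q12⁻¹) ^ n * (q21⁻¹ ^ (n+1) * q22⁻¹)
      = -(q11 ^ (n+1) * q12) := by
    have h1 : (q11⁻¹ ^ (n+1) * q12⁻¹) ^ n * (q21⁻¹ ^ (n+1) * q22⁻¹)
        = (q11 ^ ((n+1)*n) * q12 ^ n * q21 ^ (n+1) * q22)⁻¹ := by
      rw [mul_pow, ← pow_mul, mul_inv, mul_inv, mul_inv,
        ← inv_pow, ← inv_pow, ← inv_pow]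
      ring
    rw [h1]
    exact inv_eq_of_mul_eq_one_right (by rw [mul_neg, hA, neg_neg])
  have hD2sq : D2 (zz q11 q12 (n+1) * zz q11 q12 (n+1))
      = (q21⁻¹ ^ (n+1) * bb q11 q12 q21 (n+1)) •
        (FreeAlgebra.ι k 0 ^ (n+1) * zz q11 q12 (n+1)
          + (q21⁻¹ ^ (n+1) * q22⁻¹) • (zz q11 q12 (n+1) * FreeAlgebra.ι k 0 ^ (n+1))) := by
    rw [hD2mul, D2_zz q11 q12 q21 q22 hq21 D2 hD2x1 hD2x2 hD2mul, alph_zz,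
      smul_mul_assoc, smul_mul_assoc, mul_smul_comm]
    module
  have hit := D1_iter q11 q12 hq11 hq12 D1 hD1x1 hD1x2 hD1mul (n+1) 1 n
    (q21⁻¹ ^ (n+1) * q22⁻¹)
  rw [show 1 + n = n + 1 from by omega] at hit
  rw [pow_two, hD2sq, Nat.add_sub_cancel, iter_smul, hit, key]
  conv_rhs => rw [zz]
  simp only [cc, qfact_eq, pow_one]
  module
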